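/- Let σ be an involution of F commuting with ζ and c ∈ (F^×)^σ with Nm_{F/k}(c)^{m/n} = β·σ(β). On the σ-twisted F-linear dual U^⋆ of a finite-dimensional A_β-module U, the (F,ζ)-semilinear operator θ defined by (θu^*, u) = c·ζ(u^*, θ^{-1}u) satisfies θ^m = β·id_{U^⋆}; hence U^⋆ is again an A_β-module. -/

import Mathlib

/-- Let `σ` be an involution of `F` commuting with `ζ` and `c ∈ (F^×)^σ`
with `Nm_{F/k}(c)^{m/n} = β·σ(β)`.  Let `U` be a finite-dimensional `F`-vector space with an
`(F,ζ)`-semilinear automorphism `θ` (with inverse `θ'`) satisfying `θ^m = β·id`.  On the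
`σ`-twisted dual `U^⋆` (underlying space `Hom_F(U,F)`, new action `a ∙ f = σ(a) • f`), the
operator `Θ` defined by `(Θ f)(u) = c·ζ(f(θ'(u)))` is `(F,ζ)`-semilinear for the twisted
structure and satisfies `Θ^m = β·id_{U^⋆}` (i.e. `Θ^m f = σ(β) • f` for the untwisted
action); hence `U^⋆` is again an `A_β`-module. -/
theorem twisted_dual_is_Abeta_module
    {k F U : Type*} [Field k] [Field F] [Algebra k F] [FiniteDimensional k F]
    (hch : (2 : k) ≠ 0)
    (ζ : F ≃ₐ[k] F) (n m : ℕ) (hn : 0 < n) (hord : orderOf ζ = n)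
    (hfix : ∀ x : F, ζ x = x ↔ x ∈ (algebraMap k F).range)
    (hgen : ∀ g : F ≃ₐ[k] F, g ∈ Subgroup.zpowers ζ)
    (hnm : n ∣ m)
    (β : k) (hβ : β ≠ 0)
    (σ : F ≃+* F) (hσinv : ∀ a, σ (σ a) = a) (hσζ : ∀ a, σ (ζ a) = ζ (σ a))
    (c : F) (hc : c ≠ 0) (hcσ : σ c = c)
    (hnorm : algebraMap k F (Algebra.norm k c ^ (m / n)) =
      algebraMap k F β * σ (algebraMap k F β))
    [AddCommGroup U] [Module F U] [FiniteDimensional F U]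
    (θ θ' : U → U)
    (hadd : ∀ u v, θ (u + v) = θ u + θ v)
    (hsemi : ∀ (a : F) (u : U), θ (a • u) = ζ a • θ u)
    (hθθ' : ∀ u, θ (θ' u) = u) (hθ'θ : ∀ u, θ' (θ u) = u)
    (hθm : ∀ u, θ^[m] u = algebraMap k F β • u)
    (Θ : (U →ₗ[F] F) → (U →ₗ[F] F))
    (hΘ : ∀ (f : U →ₗ[F] F) (u : U), Θ f u = c * ζ (f (θ' u))) :
    (∀ (f g : U →ₗ[F] F), Θ (f + g) = Θ f + Θ g) ∧
    (∀ (a : F) (f : U →ₗ[F] F), Θ (σ a • f) = σ (ζ a) • Θ f) ∧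
    (∀ f : U →ₗ[F] F, Θ^[m] f = σ (algebraMap k F β) • f) := by
  classical
  -- F/k is Galois
  have hGal : IsGalois k F := by
    apply IsGalois.of_fixedField_eq_bot
    rw [eq_bot_iff]
    intro x hx
    rw [IntermediateField.mem_bot]
    have hζx : ζ x = x := hx ⟨ζ, Subgroup.mem_top ζ⟩
    exact (hfix x).1 hζx
  set b : F := algebraMap k F β with hb
  have hb0 : b ≠ 0 := by
    simp [hb, hβ]
  have hζn : ζ ^ n = 1 := by rw [← hord]; exact pow_orderOf_eq_one ζ
  have hζm : ζ ^ m = 1 := by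
    obtain ⟨q, rfl⟩ := hnm
    rw [pow_mul, hζn, one_pow]
  -- product of ζ^i c over i < n equals the norm
  have hprod_n : ∏ i ∈ Finset.range n, (ζ ^ i) c = algebraMap k F (Algebra.norm k c) := by
    have hfin : IsOfFinOrder ζ := by
      rw [← orderOf_pos_iff, hord]; exact hn
    have key : ∏ i ∈ Finset.range (orderOf ζ), (ζ ^ i) c = ∏ g : F ≃ₐ[k] F, g c := by
      rw [← Fin.prod_univ_eq_prod_range]
      exact Fintype.prod_equiv ((finEquivZPowers hfin).trans (Equiv.subtypeUnivEquiv hgen))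
        _ _ (fun i => rfl)
    rw [Algebra.norm_eq_prod_automorphisms, ← key, hord]
  -- product over i < m
  have hprod_mul : ∀ q : ℕ, ∏ i ∈ Finset.range (n * q), (ζ ^ i) c
      = (∏ i ∈ Finset.range n, (ζ ^ i) c) ^ q := by
    intro q
    induction q with
    | zero => simp
    | succ q ih =>
      rw [Nat.mul_succ, Finset.prod_range_add, ih, pow_succ]
      congr 1
      refine Finset.prod_congr rfl (fun i _ => ?_)
      rw [pow_add, pow_mul, hζn, one_pow, one_mul]
  have hprod_m : ∏ i ∈ Finset.range m, (ζ ^ i) c = b * σ b := by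
    obtain ⟨q, hq⟩ := hnm
    have hqd : m / n = q := by rw [hq, Nat.mul_div_cancel_left _ hn]
    calc ∏ i ∈ Finset.range m, (ζ ^ i) c
        = (∏ i ∈ Finset.range n, (ζ ^ i) c) ^ q := by rw [hq, hprod_mul]
      _ = algebraMap k F (Algebra.norm k c ^ (m / n)) := by rw [hprod_n, ← map_pow, hqd]
      _ = b * σ b := hnorm
  -- inverse iterates
  have hinv : ∀ (j : ℕ) (u : U), θ'^[j] (θ^[j] u) = u := by
    intro j
    induction j with
    | zero => intro u; rfl
    | succ j ih =>
      intro u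
      rw [Function.iterate_succ_apply' θ, Function.iterate_succ_apply θ', hθ'θ, ih]
  have hθ'm : ∀ u : U, θ'^[m] u = b⁻¹ • u := by
    intro u
    have h1 : θ^[m] (b⁻¹ • u) = u := by
      rw [hθm, smul_smul, mul_inv_cancel₀ hb0, one_smul]
    calc θ'^[m] u = θ'^[m] (θ^[m] (b⁻¹ • u)) := by rw [h1]
      _ = b⁻¹ • u := hinv m _
  -- main iterate formula
  have hiter : ∀ (j : ℕ) (f : U →ₗ[F] F) (u : U),
      Θ^[j] f u = (∏ i ∈ Finset.range j, (ζ ^ i) c) * (ζ ^ j) (f (θ'^[j] u)) := by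
    intro j
    induction j with
    | zero => intro f u; simp
    | succ j ih =>
      intro f u
      rw [Function.iterate_succ_apply' Θ, hΘ, ih, map_mul,
        Finset.prod_range_succ', map_prod, Function.iterate_succ_apply θ']
      have h1 : ∀ i, ζ ((ζ ^ i) c) = (ζ ^ (i + 1)) c := by
        intro i; rw [pow_succ']; rfl
      have h2 : ζ ((ζ ^ j) (f (θ'^[j] (θ' u)))) = (ζ ^ (j + 1)) (f (θ'^[j] (θ' u))) := by
        rw [pow_succ']; rfl
      simp only [h1, h2, pow_zero, AlgEquiv.one_apply]
      ring
  refine ⟨?_, ?_, ?_⟩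
  · intro f g
    ext u
    simp only [hΘ, LinearMap.add_apply, map_add]
    ring
  · intro a f
    ext u
    simp only [hΘ, LinearMap.smul_apply, smul_eq_mul, map_mul, hσζ]
    ring
  · intro f
    ext u
    rw [hiter m f u, hprod_m, hζm, AlgEquiv.one_apply, hθ'm, map_smul,
      smul_eq_mul, LinearMap.smul_apply, smul_eq_mul]
    field_simp
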